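/- With the setup of the failure-risk recursion, define modified kernels T̃_k(s, s') := T_k(s, s') · (1 - r(s)) and the occupation measures x_k(s) by x_0(s_0) = 1, x_0(s) = 0 for s ≠ s_0, and x_{k+1}(s') = ∑_s x_k(s) · T̃_k(s, s'). Then the execution risk from the initial state equals Er(0, s_0) = r(s_0) + ∑_{k=0}^{h-1} ∑_{s} ∑_{s'} r(s') · x_k(s) · T̃_k(s, s'). -/
import Mathlib


open Finset

theorem stmt_6 {S : Type*} [Fintype S] [DecidableEq S] (h : ℕ) (hh : 0 < h)
    (s0 : S) (T : ℕ → S → S → ℝ) (r : S → ℝ)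
    (hr : ∀ s, 0 ≤ r s ∧ r s ≤ 1)
    (hT0 : ∀ k s s', 0 ≤ T k s s') (hT1 : ∀ k s, ∑ s', T k s s' = 1)
    (Er : ℕ → S → ℝ)
    (hErh : ∀ s, Er h s = r s)
    (hEr : ∀ k < h, ∀ s : S,
      Er k s = r s + (1 - r s) * ∑ s', T k s s' * Er (k + 1) s')
    (x : ℕ → S → ℝ)
    (hx0 : ∀ s, x 0 s = if s = s0 then 1 else 0)
    (hx : ∀ k s', x (k + 1) s' = ∑ s, x k s * (T k s s' * (1 - r s))) :
    Er 0 s0 = r s0 +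
      ∑ k ∈ Finset.range h, ∑ s, ∑ s',
        r s' * x k s * (T k s s' * (1 - r s)) := by
  set A : ℕ → ℝ := fun k => ∑ s, x k s * r s with hA
  have key : ∀ m, m ≤ h → Er 0 s0 = (∑ k ∈ Finset.range m, A k) + ∑ s, x m s * Er m s := by
    intro m
    induction m with
    | zero =>
      intro _
      simp [hx0, ite_mul]
    | succ n ih =>
      intro hm
      have hn : n < h := hm
      have ih' := ih (le_of_lt hn)
      rw [Finset.sum_range_succ, ih']
      have step : ∑ s, x n s * Er n s = A n + ∑ s', x (n + 1) s' * Er (n + 1) s' := by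
        have h1 : ∑ s', x (n + 1) s' * Er (n + 1) s'
            = ∑ s, ∑ s', x n s * (T n s s' * (1 - r s)) * Er (n + 1) s' := by
          rw [Finset.sum_comm]
          refine Finset.sum_congr rfl fun s' _ => ?_
          rw [hx n s', Finset.sum_mul]
        rw [h1, hA]
        rw [← Finset.sum_add_distrib]
        refine Finset.sum_congr rfl fun s _ => ?_
        rw [hEr n hn s, mul_add, Finset.mul_sum, Finset.mul_sum]
        congr 1
        refine Finset.sum_congr rfl fun s' _ => ?_
        ring
      rw [step]; ring
  have hfin := key h le_rfl
  have hlast : ∑ s, x h s * Er h s = A h := by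
    refine Finset.sum_congr rfl fun s _ => by rw [hErh s]
  rw [hfin, hlast, ← Finset.sum_range_succ, Finset.sum_range_succ']
  have hA0 : A 0 = r s0 := by simp [hA, hx0, ite_mul]
  rw [hA0, add_comm]
  congr 1
  refine Finset.sum_congr rfl fun k _ => ?_
  rw [hA]
  rw [Finset.sum_comm]
  refine Finset.sum_congr rfl fun s' _ => ?_
  rw [hx k s', Finset.sum_mul]
  refine Finset.sum_congr rfl fun s _ => ?_
  ring
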